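/- Let p be a prime, and let K = {k₁,...,k_r} and L = {l₁,...,l_s} be disjoint subsets of {0,1,...,p-1}. Suppose 𝒜 is a family of subsets of {1,...,n} such that |A| mod p ∈ K for all A ∈ 𝒜, and |A ∩ B| mod p ∈ L for all distinct A, B ∈ 𝒜. If n ≥ 2s - 2r + 1, then |𝒜| ≤ C(n-1,s) + C(n-1,s-1) + ... + C(n-1,s-2r+1). -/

import Mathlib

open Finset

namespace ABSAux

lemma linear_mul_choose (a : ℤ) (j y : ℕ) :
    ((y:ℤ) - a) * (y.choose j : ℤ) =
      ((j:ℤ)+1) * (y.choose (j+1) : ℤ) + ((j:ℤ) - a) * (y.choose j : ℤ) := by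
  have key : ((j:ℤ)+1) * (y.choose (j+1) : ℤ) = ((y:ℤ) - (j:ℤ)) * (y.choose j : ℤ) := by
    rcases le_or_gt j y with h | h
    · have h1 := Nat.choose_succ_right_eq y j
      have h2 := congrArg (Nat.cast : ℕ → ℤ) h1
      push_cast [Nat.cast_sub h] at h2
      linarith
    · rw [Nat.choose_eq_zero_of_lt h, Nat.choose_eq_zero_of_lt (h.trans (Nat.lt_succ_self j))]
      simp
  rw [key]; ring

lemma mul_linear_expand (m : ℕ) (e : ℕ → ℤ) (a : ℤ) :
    ∃ e' : ℕ → ℤ, ∀ y : ℕ,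
      ((y:ℤ) - a) * (∑ j ∈ range (m+1), e j * (y.choose j : ℤ)) =
        ∑ j ∈ range (m+2), e' j * (y.choose j : ℤ) := by
  refine ⟨fun j => (if 1 ≤ j then e (j-1) * (j:ℤ) else 0) + (if j ≤ m then e j * ((j:ℤ) - a) else 0),
    fun y => ?_⟩
  rw [Finset.mul_sum]
  have step : ∀ j ∈ range (m+1), ((y:ℤ) - a) * (e j * (y.choose j : ℤ)) =
      e j * (((j:ℤ)+1) * (y.choose (j+1) : ℤ)) + e j * (((j:ℤ) - a) * (y.choose j : ℤ)) := by
    intro j _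
    rw [mul_left_comm, linear_mul_choose a j y, mul_add]
  rw [Finset.sum_congr rfl step, Finset.sum_add_distrib]
  have h1 : ∑ j ∈ range (m+1), e j * (((j:ℤ)+1) * (y.choose (j+1) : ℤ)) =
      ∑ j ∈ range (m+2), (if 1 ≤ j then e (j-1) * (j:ℤ) else 0) * (y.choose j : ℤ) := by
    rw [Finset.sum_range_succ' (fun j => (if 1 ≤ j then e (j-1) * (j:ℤ) else 0) * (y.choose j : ℤ)) (m+1)]
    simp only [Nat.le_add_left 1, if_true, Nat.add_sub_cancel, if_neg (by norm_num : ¬ (1:ℕ) ≤ 0)]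
    rw [zero_mul, add_zero]
    exact Finset.sum_congr rfl (fun j _ => by push_cast; ring)
  have h2 : ∑ j ∈ range (m+1), e j * (((j:ℤ) - a) * (y.choose j : ℤ)) =
      ∑ j ∈ range (m+2), (if j ≤ m then e j * ((j:ℤ) - a) else 0) * (y.choose j : ℤ) := by
    rw [Finset.sum_range_succ (fun j => (if j ≤ m then e j * ((j:ℤ) - a) else 0) * (y.choose j : ℤ)) (m+1)]
    rw [if_neg (by omega), zero_mul, add_zero]
    exact Finset.sum_congr rfl (fun j hj => by rw [if_pos (by simpa [Nat.lt_succ_iff] using hj)]; ring)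
  rw [h1, h2, ← Finset.sum_add_distrib]
  exact Finset.sum_congr rfl (fun j _ => by ring)

lemma list_prod_linear_eq (aL : List ℤ) :
    ∃ e : ℕ → ℤ, ∀ y : ℕ,
      (aL.map (fun a => (y:ℤ) - a)).prod = ∑ j ∈ range (aL.length + 1), e j * (y.choose j : ℤ) := by
  induction aL with
  | nil => exact ⟨fun j => if j = 0 then 1 else 0, by simp⟩
  | cons a t ih =>
    obtain ⟨e, he⟩ := ih
    obtain ⟨e', he'⟩ := mul_linear_expand t.length e a
    refine ⟨e', fun y => ?_⟩
    rw [List.map_cons, List.prod_cons, he y, he' y]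
    norm_num

lemma cast_descFactorial {F : Type*} [Field F] (y j : ℕ) :
    ((y.descFactorial j : ℕ) : F) = ∏ t ∈ range j, ((y:F) - t) := by
  induction j with
  | zero => simp
  | succ j ih =>
    rw [Nat.descFactorial_succ, prod_range_succ, ← ih]
    rcases le_or_gt j y with h | h
    · push_cast [Nat.cast_sub h]; ring
    · rw [Nat.sub_eq_zero_of_le h.le]
      have : ((y.descFactorial j : ℕ) : F) = 0 := by
        rw [Nat.descFactorial_eq_zero_iff_lt.2 h]; simp
      rw [this]; simp

-- pigeonhole: good sizes
lemma cast_injOn_lt (p : ℕ) [Fact p.Prime] :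
    Set.InjOn (fun y : ℕ => (y : ZMod p)) {y | y < p} := by
  intro a ha b hb hab
  have := congrArg ZMod.val hab
  rwa [ZMod.val_natCast_of_lt ha, ZMod.val_natCast_of_lt hb] at this

lemma exists_good_sizes (p : ℕ) [Fact p.Prime] (B : Finset (ZMod p)) (d : ℕ)
    (h : B.card + d < p) :
    ∃ G : Finset ℕ, G ⊆ range (B.card + d + 1) ∧ G.card = d + 1 ∧
      ∀ y ∈ G, ((y : ZMod p) ∉ B) := by
  classical
  set R := range (B.card + d + 1) with hR
  have hRp : ∀ y ∈ R, y < p := by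
    intro y hy; rw [hR, mem_range] at hy; omega
  set Bad := Finset.filter (fun y : ℕ => ((y : ZMod p) ∈ B)) R with hBad
  have hBadcard : Bad.card ≤ B.card := by
    have : Bad.image (fun y : ℕ => (y : ZMod p)) ⊆ B := by
      intro b hb
      obtain ⟨y, hy, rfl⟩ := mem_image.1 hb
      exact (mem_filter.1 hy).2
    have hinj : Set.InjOn (fun y : ℕ => (y : ZMod p)) ↑Bad := by
      apply (cast_injOn_lt p).mono
      intro y hy
      exact hRp y (mem_filter.1 hy).1
    calc Bad.card = (Bad.image (fun y : ℕ => (y : ZMod p))).card :=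
          (Finset.card_image_of_injOn hinj).symm
      _ ≤ B.card := Finset.card_le_card this
  set G0 := Finset.filter (fun y : ℕ => ((y : ZMod p) ∉ B)) R with hG0
  have hsplit : G0.card + Bad.card = R.card := by
    rw [hG0, hBad]
    classical
    rw [← Finset.card_filter_add_card_filter_not (s := R) (p := fun y : ℕ => ((y : ZMod p) ∉ B))]
    congr 2
    ext y
    simp [not_not]
  have hG0card : d + 1 ≤ G0.card := by
    have : R.card = B.card + d + 1 := by rw [hR, card_range]
    omega
  obtain ⟨G, hGsub, hGcard⟩ := Finset.exists_subset_card_eq hG0card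
  exact ⟨G, fun y hy => (mem_filter.1 (hGsub hy)).1, hGcard,
    fun y hy => (mem_filter.1 (hGsub hy)).2⟩

-- polynomial combination zero => coefficients zero
lemma poly_comb_zero {F : Type*} [Field F] :
    ∀ (m : ℕ) (β : ℕ → F),
      (∑ j ∈ range m, Polynomial.C (β j) * ∏ t ∈ range j, (Polynomial.X - Polynomial.C (t : F))) = 0 →
      ∀ j < m, β j = 0 := by
  intro m
  induction m with
  | zero => intro β _ j hj; omega
  | succ m ih =>
    intro β hsum j hj
    have hmonic : ∀ k : ℕ, (∏ t ∈ range k, (Polynomial.X - Polynomial.C (t : F))).Monic :=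
      fun k => Polynomial.monic_prod_of_monic _ _ (fun t _ => Polynomial.monic_X_sub_C _)
    have hdeg : ∀ k : ℕ, (∏ t ∈ range k, (Polynomial.X - Polynomial.C (t : F))).natDegree = k := by
      intro k
      rw [Polynomial.natDegree_prod_of_monic _ _ (fun t _ => Polynomial.monic_X_sub_C _)]
      simp only [Polynomial.natDegree_X_sub_C]
      simp
    have htop : β m = 0 := by
      have hcoeff := congrArg (fun q => Polynomial.coeff q m) hsum
      simp only [Polynomial.finset_sum_coeff, Polynomial.coeff_zero] at hcoeff
      rw [Finset.sum_range_succ] at hcoeff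
      have hlow : ∀ k ∈ range m,
          (Polynomial.C (β k) * ∏ t ∈ range k, (Polynomial.X - Polynomial.C (t : F))).coeff m = 0 := by
        intro k hk
        rw [Polynomial.coeff_C_mul]
        rw [Polynomial.coeff_eq_zero_of_natDegree_lt (by rw [hdeg]; exact mem_range.1 hk), mul_zero]
      rw [Finset.sum_eq_zero hlow, zero_add, Polynomial.coeff_C_mul] at hcoeff
      have : (∏ t ∈ range m, (Polynomial.X - Polynomial.C (t : F))).coeff m = 1 := by
        have := (hmonic m).coeff_natDegree
        rwa [hdeg] at this
      rwa [this, mul_one] at hcoeff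
    rcases Nat.lt_succ_iff_lt_or_eq.1 hj with hj' | rfl
    · apply ih β _ j hj'
      rw [Finset.sum_range_succ, htop, map_zero, zero_mul, add_zero] at hsum
      exact hsum
    · exact htop

lemma choose_cast_prod (p : ℕ) [Fact p.Prime] (y j : ℕ) (hj : j < p) :
    ((y.choose j : ℕ) : ZMod p) * ((j.factorial : ℕ) : ZMod p) =
      ∏ t ∈ range j, ((y : ZMod p) - t) := by
  have h1 : ((y.descFactorial j : ℕ) : ZMod p) = ∏ t ∈ range j, ((y : ZMod p) - t) :=
    cast_descFactorial y j
  rw [← h1, Nat.descFactorial_eq_factorial_mul_choose]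
  push_cast
  ring

lemma factorial_cast_ne_zero (p : ℕ) [Fact p.Prime] (j : ℕ) (hj : j < p) :
    ((j.factorial : ℕ) : ZMod p) ≠ 0 := by
  rw [Ne, ZMod.natCast_eq_zero_iff]
  intro hdvd
  have := (Nat.Prime.dvd_factorial (Fact.out)).1 hdvd
  omega

/-- the "levelwise constant" case of the uncertainty lemma -/
lemma lemU_const (p : ℕ) [Fact p.Prime] (c : ℕ) (X : Finset ℕ) (B : Finset (ZMod p))
    (a : Finset ℕ → ZMod p)
    (hsupp : ∀ U, a U ≠ 0 → U ⊆ X ∧ U.card ≤ c)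
    (hconst : ∀ V W : Finset ℕ, V ⊆ X → W ⊆ X → V.card = W.card → V.card ≤ c → a V = a W)
    (hvan : ∀ S : Finset ℕ, S ⊆ X → ((S.card : ZMod p) ∉ B) →
        ∑ U ∈ X.powerset, a U * (if U ⊆ S then 1 else 0) = 0)
    (hX : c + B.card ≤ X.card) (hp : B.card + c < p) :
    ∀ U, a U = 0 := by
  classical
  -- canonical representatives for each level
  have hV : ∀ j : ℕ, ∃ V : Finset ℕ, j ≤ c → (V ⊆ X ∧ V.card = j) := by
    intro j
    by_cases hj : j ≤ c
    · obtain ⟨V, hV1, hV2⟩ := Finset.exists_subset_card_eq (show j ≤ X.card by omega)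
      exact ⟨V, fun _ => ⟨hV1, hV2⟩⟩
    · exact ⟨∅, fun h => absurd h hj⟩
  choose Vc hVc using hV
  set g : ℕ → ZMod p := fun j => if hj : j ≤ c then a (Vc j) else 0 with hg
  -- main identity at good sizes
  have key : ∀ y : ℕ, y ≤ X.card → ((y : ZMod p) ∉ B) →
      ∑ j ∈ range (c+1), ((y.choose j : ℕ) : ZMod p) * g j = 0 := by
    intro y hy hygood
    obtain ⟨S, hSX, hScard⟩ := Finset.exists_subset_card_eq hy
    have h0 := hvan S hSX (by rwa [hScard])
    -- reduce ∑ over X.powerset to ∑ over S.powerset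
    have h1 : ∑ U ∈ X.powerset, a U * (if U ⊆ S then 1 else 0) = ∑ U ∈ S.powerset, a U := by
      have hstep : ∀ U ∈ X.powerset, a U * (if U ⊆ S then 1 else 0)
          = (if U ⊆ S then a U else 0) := by
        intro U _
        by_cases h : U ⊆ S <;> simp [h]
      rw [Finset.sum_congr rfl hstep, ← Finset.sum_filter]
      have : Finset.filter (fun U => U ⊆ S) X.powerset = S.powerset := by
        ext U
        simp only [Finset.mem_filter, Finset.mem_powerset]
        exact ⟨fun h => h.2, fun h => ⟨h.trans hSX, h⟩⟩
      rw [this]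
    -- each a U with U ⊆ S equals g U.card
    have h2 : ∑ U ∈ S.powerset, a U = ∑ U ∈ S.powerset, g U.card := by
      refine Finset.sum_congr rfl (fun U hU => ?_)
      rw [Finset.mem_powerset] at hU
      by_cases hUc : U.card ≤ c
      · have hVj := hVc U.card hUc
        rw [hg]
        simp only [hUc, dif_pos]
        exact hconst U (Vc U.card) (hU.trans hSX) hVj.1 hVj.2.symm hUc
      · rw [hg]
        simp only [hUc, dif_neg, not_false_iff]
        by_contra hne
        exact hUc (hsupp U hne).2
    have h3 : ∑ U ∈ S.powerset, g U.card
        = ∑ m ∈ range (S.card + 1), (S.card.choose m) • g m :=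
      Finset.sum_powerset_apply_card g
    -- switch summation range to range (c+1)
    have h4 : ∑ m ∈ range (S.card + 1), (S.card.choose m) • g m
        = ∑ j ∈ range (c+1), ((y.choose j : ℕ) : ZMod p) * g j := by
      rw [← hScard]
      have hbig : ∀ M : Finset ℕ, range (S.card + 1) ⊆ M → range (c+1) ⊆ M →
          True := fun _ _ _ => trivial
      -- extend both sums to range (S.card + c + 2)
      have e1 : ∑ m ∈ range (S.card + 1), (S.card.choose m) • g m
          = ∑ m ∈ range (S.card + c + 2), (S.card.choose m) • g m := by
        apply Finset.sum_subset
        · intro x hx; rw [mem_range] at *; omega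
        · intro x _ hx
          rw [mem_range, not_lt] at hx
          rw [Nat.choose_eq_zero_of_lt (by omega), zero_smul]
      have e2 : ∑ j ∈ range (c+1), ((S.card.choose j : ℕ) : ZMod p) * g j
          = ∑ j ∈ range (S.card + c + 2), ((S.card.choose j : ℕ) : ZMod p) * g j := by
        apply Finset.sum_subset
        · intro x hx; rw [mem_range] at *; omega
        · intro x _ hx
          rw [mem_range, not_lt] at hx
          rw [hg]
          simp only [dif_neg (by omega : ¬ x ≤ c), mul_zero]
      rw [e1, e2]
      exact Finset.sum_congr rfl (fun m _ => by simp [nsmul_eq_mul])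
    rw [h1, h2, h3, h4] at h0
    exact h0
  -- produce c+1 good sizes with distinct casts
  obtain ⟨G, hGsub, hGcard, hGgood⟩ := exists_good_sizes p B c hp
  have hGlt : ∀ y ∈ G, y < p := by
    intro y hy
    have := hGsub hy; rw [mem_range] at this; omega
  have hGle : ∀ y ∈ G, y ≤ X.card := by
    intro y hy
    have := hGsub hy; rw [mem_range] at this; omega
  -- the polynomial
  set Q : Polynomial (ZMod p) :=
    ∑ j ∈ range (c+1), Polynomial.C (g j * (((j.factorial : ℕ) : ZMod p))⁻¹) *
      ∏ t ∈ range j, (Polynomial.X - Polynomial.C (t : ZMod p)) with hQ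
  have hevalQ : ∀ y : ℕ, Q.eval ((y : ZMod p))
      = ∑ j ∈ range (c+1), g j * (((j.factorial : ℕ) : ZMod p))⁻¹ *
          ∏ t ∈ range j, ((y : ZMod p) - t) := by
    intro y
    rw [hQ, Polynomial.eval_finset_sum]
    refine Finset.sum_congr rfl (fun j _ => ?_)
    rw [Polynomial.eval_mul, Polynomial.eval_C, Polynomial.eval_prod]
    congr 1
    exact Finset.prod_congr rfl (fun t _ => by
      rw [Polynomial.eval_sub, Polynomial.eval_X, Polynomial.eval_C])
  have hQzero : Q = 0 := by
    apply Polynomial.eq_zero_of_natDegree_lt_card_of_eval_eq_zero' Q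
      (G.image (fun y : ℕ => (y : ZMod p)))
    · intro z hz
      obtain ⟨y, hy, rfl⟩ := mem_image.1 hz
      rw [hevalQ y]
      have := key y (hGle y hy) (hGgood y hy)
      rw [← this]
      refine Finset.sum_congr rfl (fun j hj => ?_)
      rw [mem_range] at hj
      have hfac := factorial_cast_ne_zero p j (by omega)
      rw [← choose_cast_prod p y j (by omega)]
      field_simp
    · have hcard : (G.image (fun y : ℕ => (y : ZMod p))).card = c + 1 := by
        rw [Finset.card_image_of_injOn, hGcard]
        exact (cast_injOn_lt p).mono (fun y hy => hGlt y hy)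
      rw [hcard]
      have : Q.natDegree ≤ c := by
        apply Polynomial.natDegree_sum_le_of_forall_le
        intro j hj
        rw [mem_range] at hj
        apply le_trans (Polynomial.natDegree_mul_le)
        have hd : (∏ t ∈ range j, (Polynomial.X - Polynomial.C (t : ZMod p))).natDegree = j := by
          rw [Polynomial.natDegree_prod_of_monic _ _ (fun t _ => Polynomial.monic_X_sub_C _)]
          simp only [Polynomial.natDegree_X_sub_C]
          simp
        rw [Polynomial.natDegree_C, hd]
        omega
      omega
  -- coefficients vanish
  have hgzero : ∀ j, j ≤ c → g j = 0 := by
    intro j hj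
    have := poly_comb_zero (c+1) (fun j => g j * (((j.factorial : ℕ) : ZMod p))⁻¹)
      (by rw [← hQ]; exact hQzero) j (by omega)
    have hfac := factorial_cast_ne_zero p j (by omega)
    field_simp at this
    simpa using this
  intro U
  by_contra hne
  obtain ⟨hUX, hUc⟩ := hsupp U hne
  have hVj := hVc U.card hUc
  have : a U = g U.card := by
    rw [hg]; simp only [hUc, dif_pos]
    exact hconst U (Vc U.card) hUX hVj.1 hVj.2.symm hUc
  rw [this, hgzero U.card hUc] at hne
  exact hne rfl

/-- Uncertainty lemma: a low-degree combination of up-sets vanishing on all "good" sizes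
is zero. -/
theorem lemU (p : ℕ) [Fact p.Prime] :
    ∀ (c : ℕ) (X : Finset ℕ) (B : Finset (ZMod p)) (a : Finset ℕ → ZMod p),
    (∀ U, a U ≠ 0 → U ⊆ X ∧ U.card ≤ c) →
    (∀ S : Finset ℕ, S ⊆ X → ((S.card : ZMod p) ∉ B) →
        ∑ U ∈ X.powerset, a U * (if U ⊆ S then 1 else 0) = 0) →
    2 * c + B.card ≤ X.card → B.card + c < p →
    ∀ U, a U = 0 := by
  intro c
  induction c with
  | zero =>
    intro X B a hsupp hvan hX hp
    apply lemU_const p 0 X B a hsupp ?_ hvan (by omega) (by omega)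
    intro V W hVX hWX hcard hc
    have hV : V = ∅ := Finset.card_eq_zero.1 (by omega)
    have hW : W = ∅ := Finset.card_eq_zero.1 (by omega)
    rw [hV, hW]
  | succ c IH =>
    intro X B a hsupp hvan hX hp
    classical
    -- pairwise exchange property
    have pair : ∀ x ∈ X, ∀ y ∈ X, x ≠ y → ∀ U : Finset ℕ, U ⊆ X → x ∉ U → y ∉ U →
        U.card ≤ c → a (insert x U) = a (insert y U) := by
      intro x hx y hy hxy U hUX hxU hyU hUc
      set X' := (X.erase x).erase y with hX'
      have hX'sub : X' ⊆ X := (Finset.erase_subset _ _).trans (Finset.erase_subset _ _)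
      have hX'card : X'.card = X.card - 2 := by
        rw [hX', Finset.card_erase_of_mem, Finset.card_erase_of_mem hx]
        · omega
        · exact Finset.mem_erase.2 ⟨hxy.symm, hy⟩
      have hxX' : x ∉ X' := by
        rw [hX']
        intro h
        exact (Finset.mem_erase.1 (Finset.mem_of_mem_erase h)).1 rfl
      have hyX' : y ∉ X' := by
        rw [hX']
        intro h
        exact (Finset.mem_erase.1 h).1 rfl
      set B' := B.image (fun b => b - 1) with hB'
      have hB'card : B'.card ≤ B.card := Finset.card_image_le
      set a' : Finset ℕ → ZMod p := fun W =>
        if W ⊆ X' ∧ W.card ≤ c then a (insert x W) - a (insert y W) else 0 with ha'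
      have hkey := IH X' B' a' ?_ ?_ ?_ ?_
      · have h : (if U ⊆ X' ∧ U.card ≤ c then a (insert x U) - a (insert y U) else 0) = 0 :=
          hkey U
        have hUX' : U ⊆ X' := by
          intro u hu
          rw [hX', Finset.mem_erase, Finset.mem_erase]
          exact ⟨fun h => hyU (h ▸ hu), fun h => hxU (h ▸ hu), hUX hu⟩
        rw [if_pos (show U ⊆ X' ∧ U.card ≤ c from ⟨hUX', hUc⟩)] at h
        exact sub_eq_zero.1 h
      · -- support
        intro W hW
        have hW2 : (if W ⊆ X' ∧ W.card ≤ c then a (insert x W) - a (insert y W) else 0) ≠ 0 := hW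
        by_cases hcond : W ⊆ X' ∧ W.card ≤ c
        · exact hcond
        · rw [if_neg hcond] at hW2
          exact absurd rfl hW2
      · -- vanishing
        intro S hSX' hSgood
        have hxS : x ∉ S := fun h => hxX' (hSX' h)
        have hyS : y ∉ S := fun h => hyX' (hSX' h)
        have hSsubX : S ⊆ X := hSX'.trans hX'sub
        have reduce : ∀ W ∈ X'.powerset,
            a' W * (if W ⊆ S then 1 else 0) =
            (if W ⊆ S then (a (insert x W) - a (insert y W)) else 0) := by
          intro W _
          by_cases hWS : W ⊆ S
          · simp only [if_pos hWS, mul_one]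
            show (if W ⊆ X' ∧ W.card ≤ c then a (insert x W) - a (insert y W) else 0)
              = a (insert x W) - a (insert y W)
            by_cases hWc : W.card ≤ c
            · rw [if_pos (show W ⊆ X' ∧ W.card ≤ c from ⟨hWS.trans hSX', hWc⟩)]
            · rw [if_neg (show ¬(W ⊆ X' ∧ W.card ≤ c) from fun hcon => hWc hcon.2)]
              have h1 : a (insert x W) = 0 := by
                by_contra hne
                have := (hsupp _ hne).2
                rw [Finset.card_insert_of_notMem (fun h => hxS (hWS h))] at this
                omega
              have h2 : a (insert y W) = 0 := by
                by_contra hne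
                have := (hsupp _ hne).2
                rw [Finset.card_insert_of_notMem (fun h => hyS (hWS h))] at this
                omega
              rw [h1, h2, sub_zero]
          · simp [hWS]
        rw [Finset.sum_congr rfl reduce, ← Finset.sum_filter]
        have hfilter : Finset.filter (fun W => W ⊆ S) X'.powerset = S.powerset := by
          ext W
          simp only [Finset.mem_filter, Finset.mem_powerset]
          exact ⟨fun h => h.2, fun h => ⟨h.trans hSX', h⟩⟩
        rw [hfilter, Finset.sum_sub_distrib]
        have main : ∀ z : ℕ, z ∈ X → z ∉ S →
            ∑ W ∈ X.powerset, a W * (if W ⊆ insert z S then 1 else 0)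
              = (∑ W ∈ S.powerset, a (insert z W)) + ∑ W ∈ S.powerset, a W := by
          intro z hzX hzS
          have hstep : ∀ W ∈ X.powerset, a W * (if W ⊆ insert z S then 1 else 0)
              = (if W ⊆ insert z S then a W else 0) := by
            intro W _
            by_cases h : W ⊆ insert z S <;> simp [h]
          rw [Finset.sum_congr rfl hstep, ← Finset.sum_filter]
          have hfilter2 : Finset.filter (fun W => W ⊆ insert z S) X.powerset
              = (insert z S).powerset := by
            ext W
            simp only [Finset.mem_filter, Finset.mem_powerset]
            refine ⟨fun h => h.2, fun h => ⟨h.trans ?_, h⟩⟩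
            intro u hu
            rcases Finset.mem_insert.1 hu with rfl | hu
            · exact hzX
            · exact hSsubX hu
          rw [hfilter2, Finset.powerset_insert, Finset.sum_union, Finset.sum_image]
          · rw [add_comm]
          · intro u hu v hv huv
            have h1 : u = (insert z u).erase z := by
              rw [Finset.erase_insert (fun h => hzS (Finset.mem_powerset.1 hu h))]
            rw [h1, huv, Finset.erase_insert (fun h => hzS (Finset.mem_powerset.1 hv h))]
          · rw [Finset.disjoint_right]
            intro W hW hW2
            obtain ⟨u, hu, rfl⟩ := Finset.mem_image.1 hW
            exact hzS (Finset.mem_powerset.1 hW2 (Finset.mem_insert_self z u))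
        have hgoodz : ∀ z : ℕ, z ∉ S → (((insert z S).card : ZMod p) ∉ B) := by
          intro z hz hmem
          apply hSgood
          rw [hB']
          refine Finset.mem_image.2 ⟨_, hmem, ?_⟩
          rw [Finset.card_insert_of_notMem hz]
          push_cast
          ring
        have hzero : ∀ z : ℕ, z ∈ X → z ∉ S →
            (∑ W ∈ S.powerset, a (insert z W)) + ∑ W ∈ S.powerset, a W = 0 := by
          intro z hzX hzS
          rw [← main z hzX hzS]
          exact hvan (insert z S) (Finset.insert_subset hzX hSsubX) (hgoodz z hzS)
        have hx0 := hzero x hx hxS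
        have hy0 := hzero y hy hyS
        have : (∑ W ∈ S.powerset, a (insert x W)) - ∑ W ∈ S.powerset, a (insert y W)
            = ((∑ W ∈ S.powerset, a (insert x W)) + ∑ W ∈ S.powerset, a W)
              - ((∑ W ∈ S.powerset, a (insert y W)) + ∑ W ∈ S.powerset, a W) := by ring
        rw [this, hx0, hy0, sub_zero]
      · -- cardinality
        have : X'.card = X.card - 2 := hX'card
        omega
      · -- field size
        omega
    -- full exchange property by induction on the size of the difference
    have exch : ∀ k : ℕ, ∀ V W : Finset ℕ, V ⊆ X → W ⊆ X → V.card = W.card →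
        V.card ≤ c + 1 → (V \ W).card = k → a V = a W := by
      intro k
      induction k using Nat.strong_induction_on with
      | _ k ihk =>
        intro V W hVX hWX hcard hc hk
        rcases Nat.eq_zero_or_pos k with rfl | hkpos
        · have hsub : V ⊆ W := by
            rw [← Finset.sdiff_eq_empty_iff_subset]
            exact Finset.card_eq_zero.1 hk
          rw [Finset.eq_of_subset_of_card_le hsub (le_of_eq hcard.symm)]
        · obtain ⟨v, hv⟩ : (V \ W).Nonempty := Finset.card_pos.1 (by omega)
          have hvV : v ∈ V := (Finset.mem_sdiff.1 hv).1
          have hvW : v ∉ W := (Finset.mem_sdiff.1 hv).2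
          have hWVne : (W \ V).Nonempty := by
            rw [Finset.sdiff_nonempty]
            intro hsub
            have hWV : W = V := Finset.eq_of_subset_of_card_le hsub (le_of_eq hcard)
            rw [hWV, Finset.sdiff_self, Finset.card_empty] at hk
            omega
          obtain ⟨w, hw⟩ := hWVne
          have hwW : w ∈ W := (Finset.mem_sdiff.1 hw).1
          have hwV : w ∉ V := (Finset.mem_sdiff.1 hw).2
          set U := V.erase v with hU
          have hUV : U ⊆ V := Finset.erase_subset _ _
          have hvU : v ∉ U := Finset.notMem_erase _ _
          have hwU : w ∉ U := fun h => hwV (hUV h)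
          have hUcard : U.card = V.card - 1 := Finset.card_erase_of_mem hvV
          have hVpos : 1 ≤ V.card := Finset.card_pos.2 ⟨v, hvV⟩
          have h1 : a V = a (insert v U) := by rw [hU, Finset.insert_erase hvV]
          have h2 : a (insert v U) = a (insert w U) :=
            pair v (hVX hvV) w (hWX hwW) (fun h => hvW (h ▸ hwW)) U
              (hUV.trans hVX) hvU hwU (by omega)
          have h3 : a (insert w U) = a W := by
            apply ihk (k - 1) (by omega) (insert w U) W
            · exact Finset.insert_subset (hWX hwW) (hUV.trans hVX)
            · exact hWX
            · rw [Finset.card_insert_of_notMem hwU]; omega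
            · rw [Finset.card_insert_of_notMem hwU]; omega
            · have hset : (insert w U) \ W = (V \ W).erase v := by
                ext u
                simp only [Finset.mem_sdiff, Finset.mem_insert, Finset.mem_erase, hU]
                constructor
                · rintro ⟨rfl | hu, huW⟩
                  · exact absurd hwW huW
                  · exact ⟨hu.1, hu.2, huW⟩
                · rintro ⟨hune, huV, huW⟩
                  exact ⟨Or.inr ⟨hune, huV⟩, huW⟩
              rw [hset, Finset.card_erase_of_mem hv, hk]
          rw [h1, h2, h3]
    apply lemU_const p (c+1) X B a hsupp ?_ hvan (by omega) (by omega)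
    intro V W hVX hWX hcard hc
    exact exch (V \ W).card V W hVX hWX hcard hc rfl

lemma finset_prod_linear_eq {γ : Type*} [DecidableEq γ] (Λ : Finset γ) (b : γ → ℤ) :
    ∃ e : ℕ → ℤ, ∀ y : ℕ,
      ∏ l ∈ Λ, ((y:ℤ) - b l) = ∑ j ∈ range (Λ.card + 1), e j * (y.choose j : ℤ) := by
  induction Λ using Finset.induction_on with
  | empty => exact ⟨fun j => if j = 0 then 1 else 0, by simp⟩
  | insert l Λ' hnotmem ih =>
    obtain ⟨e, he⟩ := ih
    obtain ⟨e', he'⟩ := mul_linear_expand Λ'.card e (b l)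
    refine ⟨e', fun y => ?_⟩
    rw [Finset.prod_insert hnotmem, he y, he' y, Finset.card_insert_of_notMem hnotmem]

lemma finset_prod_quad_eq {γ : Type*} [DecidableEq γ] (Λ : Finset γ) (b b' : γ → ℤ) :
    ∃ e : ℕ → ℤ, ∀ y : ℕ,
      ∏ l ∈ Λ, (((y:ℤ) - b l) * ((y:ℤ) - b' l))
        = ∑ j ∈ range (2 * Λ.card + 1), e j * (y.choose j : ℤ) := by
  induction Λ using Finset.induction_on with
  | empty => exact ⟨fun j => if j = 0 then 1 else 0, by simp⟩
  | insert l Λ' hnotmem ih =>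
    obtain ⟨e, he⟩ := ih
    obtain ⟨e1, he1⟩ := mul_linear_expand (2 * Λ'.card) e (b' l)
    obtain ⟨e2, he2⟩ := mul_linear_expand (2 * Λ'.card + 1) e1 (b l)
    refine ⟨e2, fun y => ?_⟩
    rw [Finset.prod_insert hnotmem, Finset.card_insert_of_notMem hnotmem, he y]
    have : 2 * (Λ'.card + 1) + 1 = (2 * Λ'.card + 1) + 2 := by ring
    rw [this, ← he2 y, ← he1 y]
    ring

/-- monomial function -/
def mono (p : ℕ) (T : Finset ℕ) : Finset ℕ → ZMod p := fun S => if T ⊆ S then 1 else 0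

lemma choose_inter_eq_sum (p : ℕ) [Fact p.Prime] (W : Finset ℕ) (j : ℕ) :
    (fun S : Finset ℕ => (((W ∩ S).card.choose j : ℕ) : ZMod p))
      = ∑ T ∈ Finset.powersetCard j W, mono p T := by
  classical
  funext S
  rw [Finset.sum_apply]
  have h1 : ∀ T ∈ Finset.powersetCard j W, mono p T S = if T ⊆ S then 1 else 0 := fun T _ => rfl
  rw [Finset.sum_congr rfl h1, Finset.sum_boole]
  congr 1
  have h2 : Finset.filter (fun T => T ⊆ S) (Finset.powersetCard j W)
      = Finset.powersetCard j (W ∩ S) := by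
    ext T
    simp only [Finset.mem_filter, Finset.mem_powersetCard, Finset.subset_inter_iff]
    tauto
  rw [h2, Finset.card_powersetCard]

lemma mono_mul_choose_eq_sum (p : ℕ) [Fact p.Prime] (U W : Finset ℕ) (j : ℕ) :
    (fun S : Finset ℕ => mono p U S * (((W ∩ S).card.choose j : ℕ) : ZMod p))
      = ∑ T ∈ Finset.powersetCard j W, mono p (U ∪ T) := by
  classical
  funext S
  rw [Finset.sum_apply]
  have h1 : ∀ T ∈ Finset.powersetCard j W, mono p (U ∪ T) S
      = mono p U S * (if T ⊆ S then 1 else 0) := by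
    intro T _
    show (if U ∪ T ⊆ S then (1 : ZMod p) else 0) = (if U ⊆ S then (1:ZMod p) else 0) * _
    by_cases hU : U ⊆ S <;> by_cases hT : T ⊆ S <;>
      simp [hU, hT, Finset.union_subset_iff]
  rw [Finset.sum_congr rfl h1, ← Finset.mul_sum]
  congr 1
  rw [Finset.sum_boole]
  congr 1
  have h2 : Finset.filter (fun T => T ⊆ S) (Finset.powersetCard j W)
      = Finset.powersetCard j (W ∩ S) := by
    ext T
    simp only [Finset.mem_filter, Finset.mem_powersetCard, Finset.subset_inter_iff]
    tauto
  rw [h2, Finset.card_powersetCard]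

lemma mem_span_prod (p : ℕ) [Fact p.Prime] (X' : Finset ℕ) (s : ℕ)
    (M : Submodule (ZMod p) (Finset ℕ → ZMod p))
    (hTT : ∀ T, T ⊆ X' → T.card ≤ s → mono p T ∈ M)
    (W : Finset ℕ) (hW : W ⊆ X') {γ : Type*} [DecidableEq γ] (Λ : Finset γ) (b : γ → ℤ)
    (hlen : Λ.card ≤ s) :
    (fun S : Finset ℕ => ((∏ l ∈ Λ, ((((W ∩ S).card : ℕ) : ℤ) - b l) : ℤ) : ZMod p)) ∈ M := by
  classical
  obtain ⟨e, he⟩ := finset_prod_linear_eq Λ b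
  have heq : (fun S : Finset ℕ => ((∏ l ∈ Λ, ((((W ∩ S).card : ℕ) : ℤ) - b l) : ℤ) : ZMod p))
      = ∑ j ∈ range (Λ.card + 1),
          ((e j : ZMod p)) • (fun S : Finset ℕ => (((W ∩ S).card.choose j : ℕ) : ZMod p)) := by
    funext S
    rw [Finset.sum_apply, he ((W ∩ S).card)]
    push_cast
    refine Finset.sum_congr rfl (fun j _ => ?_)
    simp [smul_eq_mul]
  rw [heq]
  apply Submodule.sum_mem
  intro j hj
  apply Submodule.smul_mem
  rw [choose_inter_eq_sum p W j]
  apply Submodule.sum_mem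
  intro T hT
  rw [Finset.mem_powersetCard] at hT
  rw [mem_range] at hj
  exact hTT T (hT.1.trans hW) (by omega)

lemma mem_span_mono_quad (p : ℕ) [Fact p.Prime] (X' : Finset ℕ) (s : ℕ)
    (M : Submodule (ZMod p) (Finset ℕ → ZMod p))
    (hTT : ∀ T, T ⊆ X' → T.card ≤ s → mono p T ∈ M)
    (U : Finset ℕ) (hU : U ⊆ X') {γ : Type*} [DecidableEq γ] (Λ : Finset γ) (b b' : γ → ℤ)
    (hlen : U.card + 2 * Λ.card ≤ s) :
    (fun S : Finset ℕ => mono p U S *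
        ((∏ k ∈ Λ, (((((X' ∩ S).card : ℕ) : ℤ) - b k) * ((((X' ∩ S).card : ℕ) : ℤ) - b' k)) : ℤ) : ZMod p))
      ∈ M := by
  classical
  obtain ⟨e, he⟩ := finset_prod_quad_eq Λ b b'
  have heq : (fun S : Finset ℕ => mono p U S *
        ((∏ k ∈ Λ, (((((X' ∩ S).card : ℕ) : ℤ) - b k) * ((((X' ∩ S).card : ℕ) : ℤ) - b' k)) : ℤ) : ZMod p))
      = ∑ j ∈ range (2 * Λ.card + 1),
          ((e j : ZMod p)) • (fun S : Finset ℕ =>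
            mono p U S * (((X' ∩ S).card.choose j : ℕ) : ZMod p)) := by
    funext S
    rw [Finset.sum_apply, he ((X' ∩ S).card)]
    push_cast
    rw [Finset.mul_sum]
    refine Finset.sum_congr rfl (fun j _ => ?_)
    simp only [Pi.smul_apply, smul_eq_mul]
    ring
  rw [heq]
  apply Submodule.sum_mem
  intro j hj
  apply Submodule.smul_mem
  rw [mono_mul_choose_eq_sum p U X' j]
  apply Submodule.sum_mem
  intro T hT
  rw [Finset.mem_powersetCard] at hT
  rw [mem_range] at hj
  refine hTT _ (Finset.union_subset hU hT.1) ?_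
  have := Finset.card_union_le U T
  omega

lemma card_powerset_filter (X' : Finset ℕ) (P : ℕ → Prop) [DecidablePred P] :
    (X'.powerset.filter (fun T => P T.card)).card
      = ∑ j ∈ range (X'.card + 1), if P j then X'.card.choose j else 0 := by
  classical
  rw [Finset.card_filter]
  rw [Finset.sum_powerset_apply_card (fun m => if P m then (1:ℕ) else 0)]
  refine Finset.sum_congr rfl (fun j _ => ?_)
  by_cases h : P j <;> simp [h]

lemma count_split (N r s : ℕ) :
    ∑ j ∈ range (s+1), N.choose j
      = (∑ j ∈ range (s+1), if j + 2*r ≤ s then N.choose j else 0)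
        + ∑ j ∈ range (2*r), (if j ≤ s then N.choose (s - j) else 0) := by
  classical
  have hsplit : ∑ j ∈ range (s+1), N.choose j
      = (∑ j ∈ range (s+1), if j + 2*r ≤ s then N.choose j else 0)
        + ∑ j ∈ range (s+1), if ¬ (j + 2*r ≤ s) then N.choose j else 0 := by
    rw [← Finset.sum_add_distrib]
    refine Finset.sum_congr rfl (fun j _ => ?_)
    by_cases h : j + 2*r ≤ s <;> simp [h]
  rw [hsplit]
  congr 1
  rw [← Finset.sum_filter, ← Finset.sum_filter]
  refine Finset.sum_nbij' (fun j => s - j) (fun i => s - i) ?_ ?_ ?_ ?_ ?_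
  all_goals intro j hj
  all_goals simp only [Finset.mem_filter, Finset.mem_range] at hj ⊢
  all_goals beta_reduce
  · omega
  · omega
  · omega
  · omega
  · congr 1
    omega

lemma sum_ite_ext (N s : ℕ) (P : ℕ → Prop) [DecidablePred P] (hP : ∀ j, P j → j ≤ s) :
    ∑ j ∈ range (N+1), (if P j then N.choose j else 0)
      = ∑ j ∈ range (s+1), (if P j then N.choose j else 0) := by
  have h1 : ∑ j ∈ range (N+1), (if P j then N.choose j else 0)
      = ∑ j ∈ range (N+s+2), (if P j then N.choose j else 0) := by
    apply Finset.sum_subset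
    · intro x hx; rw [mem_range] at *; omega
    · intro x _ hx
      rw [mem_range, not_lt] at hx
      rw [Nat.choose_eq_zero_of_lt (by omega)]
      simp
  have h2 : ∑ j ∈ range (s+1), (if P j then N.choose j else 0)
      = ∑ j ∈ range (N+s+2), (if P j then N.choose j else 0) := by
    apply Finset.sum_subset
    · intro x hx; rw [mem_range] at *; omega
    · intro x _ hx
      rw [mem_range, not_lt] at hx
      rw [if_neg (fun hc => by have := hP x hc; omega)]
  rw [h1, ← h2]

end ABSAux

open ABSAux in
/-- If `n ≥ 2s - 2r + 1`, a mod-`p` `L`-intersecting family with sizes mod `p` in `K`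
(`K`, `L` disjoint subsets of `{0,…,p-1}`) has at most
`C(n-1,s) + C(n-1,s-1) + ⋯ + C(n-1,s-2r+1)` members. -/
theorem stmt0 (p n r s : ℕ) (hp : p.Prime) (K L : Finset ℕ)
    (hK : K ⊆ Finset.range p) (hL : L ⊆ Finset.range p) (hdisj : Disjoint K L)
    (hKr : K.card = r) (hLs : L.card = s)
    (𝒜 : Finset (Finset ℕ)) (hsub : ∀ A ∈ 𝒜, A ⊆ Finset.Icc 1 n)
    (hsize : ∀ A ∈ 𝒜, A.card % p ∈ K)
    (hint : ∀ A ∈ 𝒜, ∀ B ∈ 𝒜, A ≠ B → (A ∩ B).card % p ∈ L)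
    (hn : (n : ℤ) ≥ 2 * s - 2 * r + 1) :
    𝒜.card ≤ ∑ j ∈ Finset.range (2 * r),
      if j ≤ s then (n - 1).choose (s - j) else 0 := by
  classical
  haveI fact : Fact p.Prime := ⟨hp⟩
  rcases Nat.eq_zero_or_pos r with hr0 | hrpos
  · have hK0 : K = ∅ := Finset.card_eq_zero.1 (by omega)
    have h𝒜 : 𝒜 = ∅ := by
      rw [Finset.eq_empty_iff_forall_notMem]
      intro A hA
      have := hsize A hA
      rw [hK0] at this
      exact Finset.notMem_empty _ this
    rw [h𝒜]
    simp
  have hrs : r + s ≤ p := by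
    have h1 : (K ∪ L).card = r + s := by
      rw [Finset.card_union_of_disjoint hdisj, hKr, hLs]
    have h2 := Finset.card_le_card (Finset.union_subset hK hL)
    rw [h1, Finset.card_range] at h2
    exact h2
  have hsp : s < p := by omega
  have hnn : 2 * s + 1 ≤ n + 2 * r := by omega
  set X' : Finset ℕ := Finset.Icc 1 (n-1) with hX'def
  have hX'card : X'.card = n - 1 := by rw [hX'def, Nat.card_Icc]; omega
  have hmemX' : ∀ A ∈ 𝒜, A.erase n ⊆ X' := by
    intro A hA u hu
    have h1 := hsub A hA (Finset.mem_of_mem_erase hu)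
    rw [Finset.mem_Icc] at h1
    have h2 : u ≠ n := (Finset.mem_erase.1 hu).1
    rw [hX'def, Finset.mem_Icc]
    omega
  set Hf : Finset ℕ → Finset ℕ → ZMod p := fun A S =>
    ∏ l ∈ L, ((((A.erase n ∩ S).card : ℕ) : ZMod p) - (l : ZMod p)
      + (if n ∈ A then 1 else 0)) with hHf
  set Rf : Finset ℕ → Finset ℕ → ZMod p := fun U S =>
    mono p U S * ((∏ k ∈ K, ((((((X' : Finset ℕ) ∩ S).card : ℕ) : ℤ) - (k:ℤ))
      * (((((X' : Finset ℕ) ∩ S).card : ℕ) : ℤ) - ((k:ℤ) - 1))) : ℤ) : ZMod p) with hRf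
  set AX := X'.powerset.filter (fun U => U.card + 2*r ≤ s) with hAX
  set TT := X'.powerset.filter (fun T => T.card ≤ s) with hTT
  set M := Submodule.span (ZMod p)
    ((TT.image (mono p) : Finset (Finset ℕ → ZMod p)) : Set (Finset ℕ → ZMod p)) with hM
  have hmonoM : ∀ T, T ⊆ X' → T.card ≤ s → mono p T ∈ M := by
    intro T h1 h2
    apply Submodule.subset_span
    refine Finset.mem_coe.2 (Finset.mem_image.2 ⟨T, ?_, rfl⟩)
    rw [hTT, Finset.mem_filter, Finset.mem_powerset]
    exact ⟨h1, h2⟩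
  have hHfM : ∀ A ∈ 𝒜, Hf A ∈ M := by
    intro A hA
    have heq : Hf A = fun S =>
        ((∏ l ∈ L, ((((A.erase n ∩ S).card : ℕ) : ℤ)
          - ((l:ℤ) - (if n ∈ A then 1 else 0))) : ℤ) : ZMod p) := by
      funext S
      rw [hHf]
      push_cast
      refine Finset.prod_congr rfl (fun l _ => ?_)
      by_cases h : n ∈ A <;> simp [h] <;> ring
    rw [heq]
    exact mem_span_prod p X' s M hmonoM (A.erase n) (hmemX' A hA) L
      (fun l => (l:ℤ) - (if n ∈ A then 1 else 0)) (by rw [hLs])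
  have hRfM : ∀ U ∈ AX, Rf U ∈ M := by
    intro U hU
    rw [hAX, Finset.mem_filter, Finset.mem_powerset] at hU
    rw [hRf]
    exact mem_span_mono_quad p X' s M hmonoM U hU.1 K (fun k => (k:ℤ)) (fun k => (k:ℤ) - 1)
      (by rw [hKr]; exact hU.2)
  have hKLne : ∀ k ∈ K, ∀ l ∈ L, ((k:ℕ) : ZMod p) ≠ ((l:ℕ) : ZMod p) := by
    intro k hk l hl heq
    have hkp : k < p := Finset.mem_range.1 (hK hk)
    have hlp : l < p := Finset.mem_range.1 (hL hl)
    have := cast_injOn_lt p (Set.mem_setOf.2 hkp) (Set.mem_setOf.2 hlp) heq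
    subst this
    exact (Finset.disjoint_left.1 hdisj) hk hl
  -- diagonal values are nonzero
  have hdiag : ∀ A ∈ 𝒜, Hf A (A.erase n) ≠ 0 := by
    intro A hA
    rw [hHf]
    apply Finset.prod_ne_zero_iff.2
    intro l hl
    rw [Finset.inter_self]
    have hval : (((A.erase n).card : ℕ) : ZMod p) + (if n ∈ A then (1:ZMod p) else 0)
        = ((A.card : ℕ) : ZMod p) := by
      by_cases h : n ∈ A
      · rw [Finset.card_erase_of_mem h, if_pos h]
        have h1 : 1 ≤ A.card := Finset.card_pos.2 ⟨n, h⟩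
        push_cast [Nat.cast_sub h1]
        ring
      · rw [Finset.erase_eq_of_notMem h, if_neg h, add_zero]
    have hre : (((A.erase n).card : ℕ) : ZMod p) - (l : ZMod p)
        + (if n ∈ A then (1:ZMod p) else 0)
        = ((A.card : ℕ) : ZMod p) - (l : ZMod p) := by
      rw [← hval]; ring
    rw [hre, sub_ne_zero]
    have hcast : ((A.card : ℕ) : ZMod p) = ((A.card % p : ℕ) : ZMod p) :=
      (ZMod.natCast_mod _ _).symm
    rw [hcast]
    exact hKLne _ (hsize A hA) l hl
  -- off-diagonal values vanish
  have hoff : ∀ A ∈ 𝒜, ∀ Bm ∈ 𝒜, A ≠ Bm → (n ∈ Bm ∨ n ∉ A) → Hf A (Bm.erase n) = 0 := by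
    intro A hA Bm hBm hne hcond
    rw [hHf]
    have hl₀L : (A ∩ Bm).card % p ∈ L := hint A hA Bm hBm hne
    apply Finset.prod_eq_zero hl₀L
    have hintereq : A.erase n ∩ Bm.erase n = (A ∩ Bm).erase n := by
      ext u; simp only [Finset.mem_inter, Finset.mem_erase]; tauto
    rw [hintereq]
    have hcast : ((((A ∩ Bm).erase n).card : ℕ) : ZMod p) + (if n ∈ A then (1:ZMod p) else 0)
        = (((A ∩ Bm).card : ℕ) : ZMod p) := by
      by_cases hA' : n ∈ A
      · have hB' : n ∈ Bm := by tauto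
        have hmem : n ∈ A ∩ Bm := Finset.mem_inter.2 ⟨hA', hB'⟩
        rw [Finset.card_erase_of_mem hmem, if_pos hA']
        have h1 : 1 ≤ (A ∩ Bm).card := Finset.card_pos.2 ⟨n, hmem⟩
        push_cast [Nat.cast_sub h1]
        ring
      · have hno : n ∉ A ∩ Bm := fun h => hA' (Finset.mem_inter.1 h).1
        rw [Finset.erase_eq_of_notMem hno, if_neg hA', add_zero]
    have hre : ((((A ∩ Bm).erase n).card : ℕ) : ZMod p) - (((A ∩ Bm).card % p : ℕ) : ZMod p)
        + (if n ∈ A then (1:ZMod p) else 0)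
        = (((A ∩ Bm).card : ℕ) : ZMod p) - (((A ∩ Bm).card % p : ℕ) : ZMod p) := by
      rw [← hcast]; ring
    rw [hre, sub_eq_zero]
    exact (ZMod.natCast_mod _ _).symm
  -- auxiliary functions vanish at member points
  have hRzero : ∀ U : Finset ℕ, ∀ Bm ∈ 𝒜, Rf U (Bm.erase n) = 0 := by
    intro U Bm hBm
    rw [hRf]
    apply mul_eq_zero_of_right
    have hXB : (X' : Finset ℕ) ∩ Bm.erase n = Bm.erase n :=
      Finset.inter_eq_right.2 (hmemX' Bm hBm)
    rw [hXB]
    push_cast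
    apply Finset.prod_eq_zero (hsize Bm hBm)
    have hcast : ((Bm.card % p : ℕ) : ZMod p) = ((Bm.card : ℕ) : ZMod p) :=
      ZMod.natCast_mod _ _
    by_cases h : n ∈ Bm
    · apply mul_eq_zero_of_right
      rw [Finset.card_erase_of_mem h]
      have h1 : 1 ≤ Bm.card := Finset.card_pos.2 ⟨n, h⟩
      rw [Nat.cast_sub h1, hcast]
      push_cast
      ring
    · apply mul_eq_zero_of_left
      rw [Finset.erase_eq_of_notMem h, hcast]
      ring
  -- the bad residue set
  set Bbad : Finset (ZMod p) := K.image (fun k => ((k:ℕ) : ZMod p))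
      ∪ K.image (fun k => ((k:ℕ) : ZMod p) - 1) with hBbad
  have hBbadcard : Bbad.card ≤ 2 * r := by
    calc Bbad.card ≤ (K.image (fun k => ((k:ℕ) : ZMod p))).card
          + (K.image (fun k => ((k:ℕ) : ZMod p) - 1)).card := Finset.card_union_le _ _
      _ ≤ K.card + K.card := Nat.add_le_add Finset.card_image_le Finset.card_image_le
      _ = 2 * r := by rw [hKr]; ring
  -- nonvanishing of the K-product at good sizes
  have hZne : ∀ S : Finset ℕ, S ⊆ X' → ((S.card : ZMod p) ∉ Bbad) →
      ((∏ k ∈ K, ((((((X' : Finset ℕ) ∩ S).card : ℕ) : ℤ) - (k:ℤ))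
        * (((((X' : Finset ℕ) ∩ S).card : ℕ) : ℤ) - ((k:ℤ) - 1))) : ℤ) : ZMod p) ≠ 0 := by
    intro S hS hgood
    have hXS : (X' : Finset ℕ) ∩ S = S := Finset.inter_eq_right.2 hS
    rw [hXS]
    push_cast
    apply Finset.prod_ne_zero_iff.2
    intro k hk
    apply mul_ne_zero
    · rw [sub_ne_zero]
      intro heq
      apply hgood
      rw [hBbad]
      exact Finset.mem_union_left _ (Finset.mem_image.2 ⟨k, hk, heq.symm⟩)
    · rw [sub_ne_zero]
      intro heq
      apply hgood
      rw [hBbad]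
      refine Finset.mem_union_right _ (Finset.mem_image.2 ⟨k, hk, ?_⟩)
      rw [← heq]
  -- the index family
  set v : ({A // A ∈ 𝒜} ⊕ {U // U ∈ AX}) → (Finset ℕ → ZMod p) :=
    Sum.elim (fun A => Hf A.val) (fun U => Rf U.val) with hvdef
  have hvM : ∀ i, v i ∈ M := by
    rintro (A | U)
    · exact hHfM A.val A.prop
    · exact hRfM U.val U.prop
  have hlin : LinearIndependent (ZMod p) v := by
    rw [Fintype.linearIndependent_iff]
    intro g hsum
    have heval : ∀ S : Finset ℕ,
        (∑ A : {A // A ∈ 𝒜}, g (Sum.inl A) * Hf A.val S)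
          + (∑ U : {U // U ∈ AX}, g (Sum.inr U) * Rf U.val S) = 0 := by
      intro S
      have h1 : (∑ i : ({A // A ∈ 𝒜} ⊕ {U // U ∈ AX}), g i • v i) S = (0 : ZMod p) := by
        rw [hsum]; rfl
      rw [Finset.sum_apply] at h1
      rw [Fintype.sum_sum_type] at h1
      simp only [Pi.smul_apply, smul_eq_mul, hvdef, Sum.elim_inl, Sum.elim_inr] at h1
      exact h1
    -- Step A : coefficients of members containing n vanish
    have hstepA : ∀ (B : {A // A ∈ 𝒜}), n ∈ B.val → g (Sum.inl B) = 0 := by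
      intro B hnB
      have h := heval (B.val.erase n)
      have hinr : ∀ U : {U // U ∈ AX},
          g (Sum.inr U) * Rf U.val (B.val.erase n) = 0 := by
        intro U
        rw [hRzero U.val B.val B.prop, mul_zero]
      rw [Finset.sum_eq_zero (fun U _ => hinr U), add_zero] at h
      have hsingle : ∑ A : {A // A ∈ 𝒜}, g (Sum.inl A) * Hf A.val (B.val.erase n)
          = g (Sum.inl B) * Hf B.val (B.val.erase n) := by
        apply Finset.sum_eq_single
        · intro A _ hAB
          rw [hoff A.val A.prop B.val B.prop (fun hcon => hAB (Subtype.ext hcon)) (Or.inl hnB),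
            mul_zero]
        · intro hB; exact absurd (Finset.mem_univ B) hB
      rw [hsingle] at h
      exact (mul_eq_zero.1 h).resolve_right (hdiag B.val B.prop)
    -- Step B : all member coefficients vanish
    have hstepB : ∀ (B : {A // A ∈ 𝒜}), g (Sum.inl B) = 0 := by
      intro B
      by_cases hnB : n ∈ B.val
      · exact hstepA B hnB
      have h := heval (B.val.erase n)
      have hinr : ∀ U : {U // U ∈ AX},
          g (Sum.inr U) * Rf U.val (B.val.erase n) = 0 := by
        intro U
        rw [hRzero U.val B.val B.prop, mul_zero]
      rw [Finset.sum_eq_zero (fun U _ => hinr U), add_zero] at h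
      have hsingle : ∑ A : {A // A ∈ 𝒜}, g (Sum.inl A) * Hf A.val (B.val.erase n)
          = g (Sum.inl B) * Hf B.val (B.val.erase n) := by
        apply Finset.sum_eq_single
        · intro A _ hAB
          by_cases hnA : n ∈ A.val
          · rw [hstepA A hnA, zero_mul]
          · rw [hoff A.val A.prop B.val B.prop (fun hcon => hAB (Subtype.ext hcon)) (Or.inr hnA),
              mul_zero]
        · intro hB; exact absurd (Finset.mem_univ B) hB
      rw [hsingle] at h
      exact (mul_eq_zero.1 h).resolve_right (hdiag B.val B.prop)
    -- Step C : auxiliary coefficients vanish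
    have hstepC : ∀ (U : {U // U ∈ AX}), g (Sum.inr U) = 0 := by
      intro U₀
      have hU₀ : U₀.val ⊆ X' ∧ U₀.val.card + 2 * r ≤ s := by
        have h : U₀.val ∈ Finset.filter (fun U => U.card + 2*r ≤ s) X'.powerset := U₀.prop
        rw [Finset.mem_filter, Finset.mem_powerset] at h
        exact h
      have h2rs : 2 * r ≤ s := le_trans (Nat.le_add_left _ _) hU₀.2
      set a : Finset ℕ → ZMod p :=
        fun U' => if hU' : U' ∈ AX then g (Sum.inr ⟨U', hU'⟩) else 0 with ha
      have hvanA : ∀ S : Finset ℕ, S ⊆ X' → ((S.card : ZMod p) ∉ Bbad) →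
          ∑ U' ∈ X'.powerset, a U' * (if U' ⊆ S then 1 else 0) = 0 := by
        intro S hS hgood
        have h := heval S
        rw [Finset.sum_eq_zero (fun A _ => by rw [hstepB A, zero_mul]), zero_add] at h
        have hfac : ∀ U : {U // U ∈ AX},
            g (Sum.inr U) * Rf U.val S
              = (g (Sum.inr U) * mono p U.val S) *
                ((∏ k ∈ K, ((((((X' : Finset ℕ) ∩ S).card : ℕ) : ℤ) - (k:ℤ))
                  * (((((X' : Finset ℕ) ∩ S).card : ℕ) : ℤ) - ((k:ℤ) - 1))) : ℤ) : ZMod p) := by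
          intro U
          rw [hRf]
          ring
        rw [Finset.sum_congr rfl (fun U _ => hfac U), ← Finset.sum_mul] at h
        have hzero := (mul_eq_zero.1 h).resolve_right (hZne S hS hgood)
        have hconv : ∑ U' ∈ X'.powerset, a U' * (if U' ⊆ S then 1 else 0)
            = ∑ U' ∈ AX, a U' * (if U' ⊆ S then 1 else 0) := by
          symm
          apply Finset.sum_subset
          · rw [hAX]; exact Finset.filter_subset _ _
          · intro U' _ hU'
            rw [ha]
            simp only [dif_neg hU', zero_mul]
        rw [hconv]
        rw [Finset.univ_eq_attach] at hzero
        calc ∑ U' ∈ AX, a U' * (if U' ⊆ S then 1 else 0)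
            = ∑ U ∈ AX.attach, g (Sum.inr U) * mono p U.val S := by
              rw [← Finset.sum_attach AX (fun U' => a U' * (if U' ⊆ S then 1 else 0))]
              refine Finset.sum_congr rfl (fun U _ => ?_)
              have hval : a U.val = g (Sum.inr U) := by
                rw [ha]; simp only [dif_pos U.prop, Subtype.coe_eta]
              rw [hval]
              rfl
          _ = 0 := hzero
      have happ := lemU p (s - 2*r) X' Bbad a ?_ hvanA ?_ ?_
      · have h := happ U₀.val
        rw [ha] at h
        simp only [dif_pos U₀.prop, Subtype.coe_eta] at h
        exact h
      · -- support
        intro U' hne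
        rw [ha] at hne
        by_cases hU' : U' ∈ AX
        · rw [hAX, Finset.mem_filter, Finset.mem_powerset] at hU'
          exact ⟨hU'.1, by omega⟩
        · simp only [dif_neg hU'] at hne
          exact absurd rfl hne
      · rw [hX'card]
        omega
      · omega
    intro i
    rcases i with A | U
    · exact hstepB A
    · exact hstepC U
  -- counting
  have hcardle : Fintype.card ({A // A ∈ 𝒜} ⊕ {U // U ∈ AX}) ≤ TT.card := by
    have h1 : LinearIndependent (ZMod p) (fun i => (⟨v i, hvM i⟩ : M)) := by
      apply LinearIndependent.of_comp M.subtype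
      exact hlin
    have h2 := h1.fintype_card_le_finrank
    have h3 : Module.finrank (ZMod p) M ≤ (TT.image (mono p)).card := by
      rw [hM]
      exact finrank_span_finset_le_card _
    have h4 : (TT.image (mono p)).card ≤ TT.card := Finset.card_image_le
    omega
  rw [Fintype.card_sum, Fintype.card_coe, Fintype.card_coe] at hcardle
  -- compute cardinalities
  have hTTcard : TT.card = ∑ j ∈ range (s+1), (n-1).choose j := by
    rw [hTT, card_powerset_filter X' (fun j => j ≤ s), hX'card]
    rw [sum_ite_ext (n-1) s (fun j => j ≤ s) (fun j h => h)]
    refine Finset.sum_congr rfl (fun j hj => ?_)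
    rw [mem_range] at hj
    rw [if_pos (by omega)]
  have hAXcard : AX.card = ∑ j ∈ range (s+1), if j + 2*r ≤ s then (n-1).choose j else 0 := by
    rw [hAX, card_powerset_filter X' (fun j => j + 2*r ≤ s), hX'card]
    exact sum_ite_ext (n-1) s (fun j => j + 2*r ≤ s) (fun j h => by omega)
  have hsplit := count_split (n-1) r s
  omega
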